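/- arXiv:2204.08215 — 4 statements merged into one kernel-verified Lean document; each statement's English description precedes it below -/
import Mathlib

section
/- Let m ≥ 1 be an integer. There exists a constant C > 0, depending only on m, such that for all reals X ≥ 2 one has ∑_{n ≤ X} τ_m(n)² ≤ C · X · (log X)^{m² − 1}. -/
noncomputable section

open scoped BigOperators

/-- The generalized divisor function `τ_m(n)`, the number of ways of writing `n`
as an ordered product of `m` positive integers. -/
def tauGen (m n : ℕ) : ℕ :=
  ((Fintype.piFinset fun _ : Fin m => Finset.Icc 1 n).filter
    (fun d : Fin m → ℕ => ∏ i, d i = n)).card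

namespace TauAux

attribute [local instance] Classical.propDecidable

open Finset

/-- The finset of ordered `m`-factorizations of `n`. -/
def Pn (m n : ℕ) : Finset (Fin m → ℕ) :=
  (Fintype.piFinset fun _ : Fin m => Finset.Icc 1 n).filter fun d : Fin m → ℕ => ∏ i, d i = n

lemma tauGen_eq (m n : ℕ) : tauGen m n = (Pn m n).card := rfl

lemma mem_Pn {m n : ℕ} (hn : 1 ≤ n) {d : Fin m → ℕ} :
    d ∈ Pn m n ↔ (∀ i, 1 ≤ d i) ∧ ∏ i, d i = n := by
  simp only [Pn, Finset.mem_filter, Fintype.mem_piFinset, Finset.mem_Icc]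
  constructor
  · rintro ⟨h1, h2⟩
    exact ⟨fun i => (h1 i).1, h2⟩
  · rintro ⟨h1, h2⟩
    refine ⟨fun i => ⟨h1 i, ?_⟩, h2⟩
    have hdvd : d i ∣ ∏ j, d j := Finset.dvd_prod_of_mem d (Finset.mem_univ i)
    have := Nat.le_of_dvd (by omega) hdvd
    omega

lemma exists_split :
    ∀ (m : ℕ) (a b : ℕ), 0 < a → 0 < b → ∀ d : Fin m → ℕ, ∏ i, d i = a * b →
      ∃ u v : Fin m → ℕ, ∏ i, u i = a ∧ ∏ i, v i = b ∧ ∀ i, d i = u i * v i := by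
  intro m
  induction m with
  | zero =>
    intro a b ha hb d hd
    simp only [Finset.univ_eq_empty, Finset.prod_empty] at hd
    have h1 : a = 1 := Nat.dvd_one.mp ⟨b, hd⟩
    have h2 : b = 1 := Nat.dvd_one.mp ⟨a, by rw [hd]; ring⟩
    exact ⟨fun _ => 1, fun _ => 1, by simp [h1], by simp [h2], fun i => i.elim0⟩
  | succ k ih =>
    intro a b ha hb d hd
    rw [Fin.prod_univ_succ] at hd
    have h0 : d 0 ∣ a * b := ⟨∏ i : Fin k, d i.succ, hd.symm⟩
    obtain ⟨a₁, b₁, ha₁, hb₁, hab⟩ := Nat.dvd_mul.mp h0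
    obtain ⟨a', rfl⟩ := ha₁
    obtain ⟨b', rfl⟩ := hb₁
    have ha₁0 : 0 < a₁ := by
      rcases Nat.eq_zero_or_pos a₁ with h | h
      · simp [h] at ha
      · exact h
    have ha'0 : 0 < a' := by
      rcases Nat.eq_zero_or_pos a' with h | h
      · simp [h] at ha
      · exact h
    have hb₁0 : 0 < b₁ := by
      rcases Nat.eq_zero_or_pos b₁ with h | h
      · simp [h] at hb
      · exact h
    have hb'0 : 0 < b' := by
      rcases Nat.eq_zero_or_pos b' with h | h
      · simp [h] at hb
      · exact h
    have hrest : ∏ i : Fin k, d i.succ = a' * b' := by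
      have h1 : (a₁ * b₁) * ∏ i : Fin k, d i.succ = (a₁ * b₁) * (a' * b') := by
        rw [← hab] at hd
        calc (a₁ * b₁) * ∏ i : Fin k, d i.succ = a₁ * a' * (b₁ * b') := by
              exact hd
          _ = (a₁ * b₁) * (a' * b') := by ring
      exact Nat.eq_of_mul_eq_mul_left (Nat.mul_pos ha₁0 hb₁0) h1
    obtain ⟨u, v, hu, hv, huv⟩ := ih a' b' ha'0 hb'0 (fun i => d i.succ) hrest
    refine ⟨Fin.cons a₁ u, Fin.cons b₁ v, ?_, ?_, ?_⟩
    · simp [Fin.prod_univ_succ, hu]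
    · simp [Fin.prod_univ_succ, hv]
    · intro i
      refine Fin.cases ?_ (fun j => ?_) i
      · simpa using hab.symm
      · simpa using huv j

lemma tauGen_mul_le (m a b : ℕ) (ha : 0 < a) (hb : 0 < b) :
    tauGen m (a * b) ≤ tauGen m a * tauGen m b := by
  rw [tauGen_eq, tauGen_eq, tauGen_eq, ← Finset.card_product]
  apply Finset.card_le_card_of_surjOn
    (fun p : (Fin m → ℕ) × (Fin m → ℕ) => fun i => p.1 i * p.2 i)
  intro d hd
  rw [Finset.mem_coe, mem_Pn (Nat.mul_pos ha hb)] at hd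
  obtain ⟨u, v, hu, hv, huv⟩ := exists_split m a b ha hb d hd.2
  refine ⟨(u, v), ?_, ?_⟩
  · rw [Finset.mem_coe, Finset.mem_product, mem_Pn ha, mem_Pn hb]
    have hui : ∀ i, 1 ≤ u i := by
      intro i
      have h := hd.1 i
      rw [huv i] at h
      exact Nat.pos_of_ne_zero fun h0 => by simp [h0] at h
    have hvi : ∀ i, 1 ≤ v i := by
      intro i
      have h := hd.1 i
      rw [huv i] at h
      exact Nat.pos_of_ne_zero fun h0 => by simp [h0] at h
    exact ⟨⟨hui, hu⟩, ⟨hvi, hv⟩⟩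
  · funext i
    exact (huv i).symm

lemma tauGen_one (m : ℕ) : tauGen m 1 = 1 := by
  rw [tauGen_eq]
  have : Pn m 1 = {fun _ => 1} := by
    ext d
    rw [mem_Pn le_rfl, Finset.mem_singleton]
    constructor
    · rintro ⟨h1, h2⟩
      funext i
      have hdvd : d i ∣ ∏ j, d j := Finset.dvd_prod_of_mem d (Finset.mem_univ i)
      rw [h2] at hdvd
      exact Nat.dvd_one.mp hdvd
    · rintro rfl
      exact ⟨fun _ => le_rfl, by simp⟩
  rw [this, Finset.card_singleton]

lemma tauGen_prod_le (m : ℕ) {ι : Type*} (s : Finset ι) (d : ι → ℕ)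
    (hd : ∀ i ∈ s, 0 < d i) :
    tauGen m (∏ i ∈ s, d i) ≤ ∏ i ∈ s, tauGen m (d i) := by
  induction s using Finset.cons_induction with
  | empty => simp [tauGen_one]
  | cons a s has ih =>
    rw [Finset.prod_cons, Finset.prod_cons]
    have hpos : 0 < ∏ i ∈ s, d i :=
      Finset.prod_pos fun i hi => hd i (Finset.mem_cons.mpr (Or.inr hi))
    calc tauGen m (d a * ∏ i ∈ s, d i)
        ≤ tauGen m (d a) * tauGen m (∏ i ∈ s, d i) :=
          tauGen_mul_le m _ _ (hd a (Finset.mem_cons_self a s)) hpos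
      _ ≤ tauGen m (d a) * ∏ i ∈ s, tauGen m (d i) :=
          Nat.mul_le_mul_left _ (ih fun i hi => hd i (Finset.mem_cons.mpr (Or.inr hi)))

/-- Tuples indexed by `ι` with entries `≥ 1` and product at most `X`. -/
def fc (ι : Type) [Fintype ι] [DecidableEq ι] (X : ℝ) : Finset (ι → ℕ) :=
  (Fintype.piFinset fun _ : ι => Finset.Icc 1 ⌊X⌋₊).filter
    fun d : ι → ℕ => ((∏ i, d i : ℕ) : ℝ) ≤ X

lemma mem_fc {ι : Type} [Fintype ι] [DecidableEq ι] {X : ℝ} (hX : 0 ≤ X) {d : ι → ℕ} :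
    d ∈ fc ι X ↔ (∀ i, 1 ≤ d i) ∧ ((∏ i, d i : ℕ) : ℝ) ≤ X := by
  simp only [fc, Finset.mem_filter, Fintype.mem_piFinset, Finset.mem_Icc]
  constructor
  · rintro ⟨h1, h2⟩
    exact ⟨fun i => (h1 i).1, h2⟩
  · rintro ⟨h1, h2⟩
    refine ⟨fun i => ⟨h1 i, ?_⟩, h2⟩
    have hle : d i ≤ ∏ j, d j :=
      Finset.single_le_prod' (fun j _ => h1 j) (Finset.mem_univ i)
    exact Nat.le_floor (le_trans (Nat.cast_le.mpr hle) h2)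

lemma fc_card_reindex {ι κ : Type} [Fintype ι] [DecidableEq ι] [Fintype κ] [DecidableEq κ]
    (e : ι ≃ κ) (X : ℝ) (hX : 0 ≤ X) : (fc ι X).card = (fc κ X).card := by
  apply Finset.card_bij' (fun d _ => d ∘ e.symm) (fun d _ => d ∘ e)
  · intro d hd
    obtain ⟨h1, h2⟩ := (mem_fc hX).mp hd
    refine (mem_fc hX).mpr ⟨fun j => h1 _, ?_⟩
    have : ∏ j : κ, d (e.symm j) = ∏ i : ι, d i := Equiv.prod_comp e.symm d
    simpa [Function.comp, this] using h2
  · intro d hd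
    obtain ⟨h1, h2⟩ := (mem_fc hX).mp hd
    refine (mem_fc hX).mpr ⟨fun j => h1 _, ?_⟩
    have : ∏ i : ι, d (e i) = ∏ j : κ, d j := Equiv.prod_comp e d
    simpa [Function.comp, this] using h2
  · intro d hd
    funext i
    simp
  · intro d hd
    funext j
    simp

lemma fc_card_succ (k : ℕ) (X : ℝ) (hX : 1 ≤ X) :
    (fc (Fin (k + 1)) X).card = ∑ j ∈ Finset.Icc 1 ⌊X⌋₊, (fc (Fin k) (X / j)).card := by
  have h0 : (0 : ℝ) ≤ X := by linarith
  rw [Finset.card_eq_sum_card_fiberwise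
    (f := fun d : Fin (k + 1) → ℕ => d 0) (t := Finset.Icc 1 ⌊X⌋₊) ?_]
  · apply Finset.sum_congr rfl
    intro j hj
    obtain ⟨hj1, hjN⟩ := Finset.mem_Icc.mp hj
    have hjR : (1 : ℝ) ≤ (j : ℝ) := by exact_mod_cast hj1
    have hjpos : (0 : ℝ) < (j : ℝ) := by linarith
    have hXj0 : (0 : ℝ) ≤ X / j := div_nonneg h0 (le_of_lt hjpos)
    refine Finset.card_bij' (fun d _ => Fin.tail d) (fun t _ => Fin.cons j t)
      ?_ ?_ ?_ ?_
    · intro d hd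
      obtain ⟨hdm, hd0⟩ := Finset.mem_filter.mp hd
      obtain ⟨h1, h2⟩ := (mem_fc h0).mp hdm
      refine (mem_fc hXj0).mpr ⟨fun i => h1 _, ?_⟩
      rw [le_div_iff₀ hjpos]
      have hprod : ∏ i, d i = d 0 * ∏ i : Fin k, Fin.tail d i := Fin.prod_univ_succ d
      rw [hprod, hd0] at h2
      push_cast at h2 ⊢
      linarith [h2]
    · intro t ht
      obtain ⟨h1, h2⟩ := (mem_fc hXj0).mp ht
      rw [Finset.mem_filter]
      constructor
      · refine (mem_fc h0).mpr ⟨?_, ?_⟩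
        · intro i
          refine Fin.cases ?_ (fun i => ?_) i
          · simpa using hj1
          · simpa using h1 i
        · have hprod : ∏ i, (Fin.cons j t : Fin (k+1) → ℕ) i = j * ∏ i : Fin k, t i := by
            rw [Fin.prod_univ_succ]
            simp
          rw [hprod]
          push_cast
          rw [le_div_iff₀ hjpos] at h2
          push_cast at h2
          linarith [h2]
      · simp
    · intro d hd
      have hd0 : d 0 = j := (Finset.mem_filter.mp hd).2
      have h := Fin.cons_self_tail (α := fun _ => ℕ) d
      rw [hd0] at h
      exact h
    · intro t ht
      simp
  · intro d hd
    have := (Finset.mem_filter.mp hd).1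
    exact Fintype.mem_piFinset.mp this 0

lemma sum_inv_le (N : ℕ) (X : ℝ) (hX : 1 ≤ X) (hN : (N : ℝ) ≤ X) :
    ∑ j ∈ Finset.Icc 1 N, ((j : ℝ))⁻¹ ≤ 1 + Real.log X := by
  have h1 : ∑ j ∈ Finset.Icc 1 N, ((j : ℝ))⁻¹ = ((harmonic N : ℚ) : ℝ) := by
    rw [harmonic_eq_sum_Icc]
    push_cast
    rfl
  rw [h1]
  calc ((harmonic N : ℚ) : ℝ) ≤ 1 + Real.log N := harmonic_le_one_add_log N
    _ ≤ 1 + Real.log X := by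
      rcases Nat.eq_zero_or_pos N with h | h
      · simp [h]
        exact Real.log_nonneg hX
      · have : (0 : ℝ) < N := by exact_mod_cast h
        exact add_le_add_right (Real.log_le_log this hN) 1

lemma fc_card_le (k : ℕ) : ∀ X : ℝ, 1 ≤ X →
    ((fc (Fin (k + 1)) X).card : ℝ) ≤ X * (1 + Real.log X) ^ k := by
  induction k with
  | zero =>
    intro X hX
    have h0 : (0 : ℝ) ≤ X := by linarith
    simp only [pow_zero, mul_one]
    calc ((fc (Fin 1) X).card : ℝ)
        ≤ ((Fintype.piFinset fun _ : Fin 1 => Finset.Icc 1 ⌊X⌋₊).card : ℝ) := by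
          exact_mod_cast Nat.cast_le.mpr (Finset.card_filter_le _ _)
      _ = (⌊X⌋₊ : ℝ) := by
          rw [Fintype.card_piFinset]
          simp
      _ ≤ X := Nat.floor_le h0
  | succ k ih =>
    intro X hX
    have h0 : (0 : ℝ) ≤ X := by linarith
    have hlogX : 0 ≤ Real.log X := Real.log_nonneg hX
    have hNX : ((⌊X⌋₊ : ℕ) : ℝ) ≤ X := Nat.floor_le h0
    rw [fc_card_succ (k + 1) X hX]
    push_cast
    have hterm : ∀ j ∈ Finset.Icc 1 ⌊X⌋₊,
        ((fc (Fin (k + 1)) (X / j)).card : ℝ) ≤ (X / j) * (1 + Real.log X) ^ k := by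
      intro j hj
      obtain ⟨hj1, hjN⟩ := Finset.mem_Icc.mp hj
      have hjR : (1 : ℝ) ≤ (j : ℝ) := by exact_mod_cast hj1
      have hjX : (j : ℝ) ≤ X := le_trans (by exact_mod_cast hjN) hNX
      have hXj : 1 ≤ X / j := (one_le_div (by linarith)).mpr hjX
      calc ((fc (Fin (k + 1)) (X / j)).card : ℝ)
          ≤ (X / j) * (1 + Real.log (X / j)) ^ k := ih (X / j) hXj
        _ ≤ (X / j) * (1 + Real.log X) ^ k := by
            apply mul_le_mul_of_nonneg_left _ (by positivity)
            apply pow_le_pow_left₀ (by linarith [Real.log_nonneg hXj])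
            have : Real.log (X / j) ≤ Real.log X :=
              Real.log_le_log (by linarith) (div_le_self h0 hjR)
            linarith
    calc ∑ j ∈ Finset.Icc 1 ⌊X⌋₊, ((fc (Fin (k + 1)) (X / j)).card : ℝ)
        ≤ ∑ j ∈ Finset.Icc 1 ⌊X⌋₊, (X / j) * (1 + Real.log X) ^ k :=
          Finset.sum_le_sum hterm
      _ = (X * (1 + Real.log X) ^ k) * ∑ j ∈ Finset.Icc 1 ⌊X⌋₊, ((j : ℝ))⁻¹ := by
          rw [Finset.mul_sum]
          apply Finset.sum_congr rfl
          intro j hj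
          ring
      _ ≤ (X * (1 + Real.log X) ^ k) * (1 + Real.log X) := by
          apply mul_le_mul_of_nonneg_left (sum_inv_le ⌊X⌋₊ X hX hNX)
          positivity
      _ = X * (1 + Real.log X) ^ (k + 1) := by ring

lemma step_A1 (m : ℕ) (X : ℝ) (hX : 1 ≤ X) :
    ∑ n ∈ Finset.Icc 1 ⌊X⌋₊, tauGen m n * tauGen m n =
      ∑ d ∈ fc (Fin m) X, tauGen m (∏ i, d i) := by
  have h0 : (0 : ℝ) ≤ X := by linarith
  have hmaps : ∀ d ∈ fc (Fin m) X, (∏ i, d i) ∈ Finset.Icc 1 ⌊X⌋₊ := by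
    intro d hd
    obtain ⟨h1, h2⟩ := (mem_fc h0).mp hd
    refine Finset.mem_Icc.mpr ⟨Finset.one_le_prod' fun i _ => h1 i, Nat.le_floor h2⟩
  rw [← Finset.sum_fiberwise_of_maps_to hmaps (fun d => tauGen m (∏ i, d i))]
  apply Finset.sum_congr rfl
  intro n hn
  obtain ⟨hn1, hnN⟩ := Finset.mem_Icc.mp hn
  have hfib : (fc (Fin m) X).filter (fun d => ∏ i, d i = n) = Pn m n := by
    ext d
    rw [Finset.mem_filter, mem_fc h0, mem_Pn hn1]
    constructor
    · rintro ⟨⟨h1, _⟩, h3⟩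
      exact ⟨h1, h3⟩
    · rintro ⟨h1, h3⟩
      refine ⟨⟨h1, ?_⟩, h3⟩
      rw [h3]
      calc ((n : ℕ) : ℝ) ≤ (⌊X⌋₊ : ℝ) := by exact_mod_cast hnN
        _ ≤ X := Nat.floor_le h0
  calc tauGen m n * tauGen m n
      = ((fc (Fin m) X).filter (fun d => ∏ i, d i = n)).card * tauGen m n := by
        rw [hfib, tauGen_eq]
    _ = ∑ d ∈ (fc (Fin m) X).filter (fun d => ∏ i, d i = n), tauGen m (∏ i, d i) := by
        rw [Finset.sum_congr rfl (fun d hd => by rw [(Finset.mem_filter.mp hd).2]),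
          Finset.sum_const, smul_eq_mul]

lemma step_A3 (m : ℕ) (X : ℝ) (hX : 1 ≤ X) :
    ∑ d ∈ fc (Fin m) X, ∏ i, tauGen m (d i) = (fc (Fin m × Fin m) X).card := by
  have h0 : (0 : ℝ) ≤ X := by linarith
  have hmaps : ∀ g ∈ fc (Fin m × Fin m) X,
      (fun i => ∏ j, g (i, j)) ∈ fc (Fin m) X := by
    intro g hg
    obtain ⟨h1, h2⟩ := (mem_fc h0).mp hg
    refine (mem_fc h0).mpr ⟨fun i => Finset.one_le_prod' fun j _ => h1 (i, j), ?_⟩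
    have : ∏ i, ∏ j, g (i, j) = ∏ p : Fin m × Fin m, g p := (Fintype.prod_prod_type g).symm
    rw [this]
    exact h2
  rw [Finset.card_eq_sum_card_fiberwise hmaps]
  apply Finset.sum_congr rfl
  intro d hd
  obtain ⟨hd1, hd2⟩ := (mem_fc h0).mp hd
  have hdN : ∀ i, d i ≤ ⌊X⌋₊ := by
    intro i
    have hle : d i ≤ ∏ j, d j := Finset.single_le_prod' (fun j _ => hd1 j) (Finset.mem_univ i)
    exact Nat.le_floor (le_trans (Nat.cast_le.mpr hle) hd2)
  have hprodc : ∏ i, tauGen m (d i) = (Fintype.piFinset fun i => Pn m (d i)).card := by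
    rw [Fintype.card_piFinset]
    exact Finset.prod_congr rfl fun i _ => tauGen_eq m (d i)
  rw [hprodc]
  refine Finset.card_bij' (fun g _ => fun p : Fin m × Fin m => g p.1 p.2)
    (fun g _ => fun i j => g (i, j)) ?_ ?_ ?_ ?_
  · intro g hg
    have hgm := Fintype.mem_piFinset.mp hg
    have hrow : ∀ i, (∀ j, 1 ≤ g i j) ∧ ∏ j, g i j = d i :=
      fun i => (mem_Pn (hd1 i)).mp (hgm i)
    rw [Finset.mem_filter]
    constructor
    · refine (mem_fc h0).mpr ⟨fun p => (hrow p.1).1 p.2, ?_⟩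
      have he1 : ∏ p : Fin m × Fin m, g p.1 p.2 = ∏ i, ∏ j, g i j :=
        Fintype.prod_prod_type _
      rw [he1]
      have he2 : ∏ i, ∏ j, g i j = ∏ i, d i := Finset.prod_congr rfl fun i _ => (hrow i).2
      rw [he2]
      exact hd2
    · funext i
      exact (hrow i).2
  · intro g hg
    obtain ⟨hgm, hgp⟩ := Finset.mem_filter.mp hg
    obtain ⟨h1, h2⟩ := (mem_fc h0).mp hgm
    refine Fintype.mem_piFinset.mpr fun i => ?_
    refine (mem_Pn (hd1 i)).mpr ⟨fun j => h1 (i, j), ?_⟩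
    exact congrFun hgp i
  · intro g hg
    rfl
  · intro g hg
    rfl

theorem main_bound (m : ℕ) (hm : 1 ≤ m) (X : ℝ) (hX : 2 ≤ X) :
    ∑ n ∈ Finset.Icc 1 ⌊X⌋₊, (tauGen m n : ℝ) ^ 2 ≤
      (1 + 1 / Real.log 2) ^ (m * m - 1) * X * Real.log X ^ ((m : ℝ) ^ 2 - 1) := by
  have hX1 : (1 : ℝ) ≤ X := by linarith
  have h0 : (0 : ℝ) ≤ X := by linarith
  have hmm1 : 1 ≤ m * m := Nat.one_le_iff_ne_zero.mpr (by positivity)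
  have hmm : m * m - 1 + 1 = m * m := Nat.succ_pred_eq_of_pos hmm1
  -- natural number bound
  have hA2 : ∑ d ∈ fc (Fin m) X, tauGen m (∏ i, d i) ≤
      ∑ d ∈ fc (Fin m) X, ∏ i, tauGen m (d i) := by
    refine Finset.sum_le_sum fun d hd => ?_
    exact tauGen_prod_le m Finset.univ d fun i _ => ((mem_fc h0).mp hd).1 i
  have hA4 : (fc (Fin m × Fin m) X).card = (fc (Fin (m * m)) X).card :=
    fc_card_reindex finProdFinEquiv X h0
  have hnat : ∑ n ∈ Finset.Icc 1 ⌊X⌋₊, tauGen m n * tauGen m n ≤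
      (fc (Fin (m * m)) X).card := by
    rw [step_A1 m X hX1, ← hA4, ← step_A3 m X hX1]
    exact hA2
  have hB : ((fc (Fin (m * m)) X).card : ℝ) ≤ X * (1 + Real.log X) ^ (m * m - 1) := by
    have := fc_card_le (m * m - 1) X hX1
    rwa [hmm] at this
  have hcast : ∑ n ∈ Finset.Icc 1 ⌊X⌋₊, (tauGen m n : ℝ) ^ 2 =
      ((∑ n ∈ Finset.Icc 1 ⌊X⌋₊, tauGen m n * tauGen m n : ℕ) : ℝ) := by
    push_cast
    apply Finset.sum_congr rfl
    intro n _
    ring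
  have hlog2 : (0 : ℝ) < Real.log 2 := Real.log_pos one_lt_two
  have hlogX2 : Real.log 2 ≤ Real.log X := Real.log_le_log (by norm_num) hX
  have hlogX : (0 : ℝ) < Real.log X := lt_of_lt_of_le hlog2 hlogX2
  have hkey : 1 + Real.log X ≤ (1 + 1 / Real.log 2) * Real.log X := by
    have h1 : 1 ≤ Real.log X / Real.log 2 := (one_le_div hlog2).mpr hlogX2
    have h2 : Real.log X / Real.log 2 = (1 / Real.log 2) * Real.log X := by ring
    nlinarith [h1, h2]
  have hrpow : Real.log X ^ ((m : ℝ) ^ 2 - 1) = Real.log X ^ (m * m - 1 : ℕ) := by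
    have hc : ((m : ℝ) ^ 2 - 1) = ((m * m - 1 : ℕ) : ℝ) := by
      rw [Nat.cast_sub hmm1]
      push_cast
      ring
    rw [hc, Real.rpow_natCast]
  rw [hcast, hrpow]
  calc ((∑ n ∈ Finset.Icc 1 ⌊X⌋₊, tauGen m n * tauGen m n : ℕ) : ℝ)
      ≤ ((fc (Fin (m * m)) X).card : ℝ) := Nat.cast_le.mpr hnat
    _ ≤ X * (1 + Real.log X) ^ (m * m - 1) := hB
    _ ≤ X * ((1 + 1 / Real.log 2) * Real.log X) ^ (m * m - 1) := by
        apply mul_le_mul_of_nonneg_left _ h0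
        exact pow_le_pow_left₀ (by linarith) hkey _
    _ = (1 + 1 / Real.log 2) ^ (m * m - 1) * X * Real.log X ^ (m * m - 1) := by
        rw [mul_pow]
        ring

end TauAux

/-- The elementary second-moment bound for `τ_m`. -/
theorem tauGen_sq_sum_bound (m : ℕ) (hm : 1 ≤ m) :
    ∃ C : ℝ, 0 < C ∧ ∀ X : ℝ, 2 ≤ X →
      ∑ n ∈ Finset.Icc 1 ⌊X⌋₊, (tauGen m n : ℝ) ^ 2 ≤
        C * X * (Real.log X) ^ ((m : ℝ) ^ 2 - 1) := by
  refine ⟨(1 + 1 / Real.log 2) ^ (m * m - 1), ?_, fun X hX => TauAux.main_bound m hm X hX⟩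
  have hlog2 : (0 : ℝ) < Real.log 2 := Real.log_pos one_lt_two
  positivity
end
end

section
/- For every integer r ≥ 1, one has ∫₀^π |sin((r+1)θ)| · sin θ dθ = (2(r+1) / (r(r+2))) · cot(π / (2(r+1))). Equivalently, 1 − (2/π) ∫₀^π (|sin((r+1)θ)| / sin θ) · (sin θ)² dθ = 1 − (4(r+1) / (r(r+2)π)) · cot(π / (2(r+1))). -/
noncomputable section
open Real Finset

lemma sum_sin_eq_cot (n : ℕ) (hn : 1 ≤ n) :
    ∑ k ∈ range n, Real.sin (k * Real.pi / n) = Real.cot (Real.pi / (2 * n)) := by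
  set x : ℝ := Real.pi / (2 * n) with hx
  have hn0 : (0:ℝ) < n := by exact_mod_cast hn
  have hn1 : (1:ℝ) ≤ n := by exact_mod_cast hn
  have hxpos : 0 < x := by positivity
  have hxlt : x < Real.pi := by
    rw [hx, div_lt_iff₀ (by positivity)]
    nlinarith [Real.pi_pos]
  have hsx : Real.sin x ≠ 0 := ne_of_gt (Real.sin_pos_of_pos_of_lt_pi hxpos hxlt)
  have key : ∀ k : ℕ, Real.sin (k * Real.pi / n) * (2 * Real.sin x)
      = Real.cos ((2 * (k:ℝ) - 1) * x) - Real.cos ((2 * ((k:ℕ)+1:ℕ) - 1 : ℝ) * x) := by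
    intro k
    have h1 : (k : ℝ) * Real.pi / n = 2 * k * x := by
      rw [hx]; field_simp
    rw [h1, Real.cos_sub_cos]
    have e1 : ((2*(k:ℝ)-1)*x + (2*((k:ℕ)+1:ℕ)-1:ℝ)*x)/2 = 2*k*x := by push_cast; ring
    have e2 : ((2*(k:ℝ)-1)*x - (2*((k:ℕ)+1:ℕ)-1:ℝ)*x)/2 = -x := by push_cast; ring
    rw [e1, e2, Real.sin_neg]; ring
  have tele : ∑ k ∈ range n, (Real.cos ((2*(k:ℝ)-1)*x) - Real.cos ((2*((k:ℕ)+1:ℕ)-1:ℝ)*x))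
      = Real.cos ((2*(0:ℝ)-1)*x) - Real.cos ((2*(n:ℝ)-1)*x) := by
    have := Finset.sum_range_sub' (fun k : ℕ => Real.cos ((2*(k:ℝ)-1)*x)) n
    simpa using this
  have e3 : (2*(0:ℝ)-1)*x = -x := by ring
  have e4 : (2*(n:ℝ)-1)*x = Real.pi - x := by
    rw [hx]; field_simp
  have hsum : (∑ k ∈ range n, Real.sin (k * Real.pi / n)) * (2 * Real.sin x)
      = 2 * Real.cos x := by
    rw [Finset.sum_mul, Finset.sum_congr rfl (fun k _ => key k), tele, e3, e4,
      Real.cos_neg, Real.cos_pi_sub]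
    ring
  rw [Real.cot_eq_cos_div_sin]
  field_simp at hsum ⊢
  simp only [mul_comm Real.pi] at ⊢
  linarith [hsum]

lemma hasDerivAt_sin_cmul (c θ : ℝ) :
    HasDerivAt (fun x => Real.sin (c*x)) (c * Real.cos (c*θ)) θ := by
  have := (Real.hasDerivAt_sin (c*θ)).comp θ ((hasDerivAt_id θ).const_mul c)
  simpa [Function.comp_def, mul_comm] using this

lemma hasDerivAt_F (N : ℝ) (h1 : N - 1 ≠ 0) (h2 : N + 1 ≠ 0) (θ : ℝ) :
    HasDerivAt (fun x => (Real.sin ((N-1)*x)/(N-1) - Real.sin ((N+1)*x)/(N+1))/2)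
      (Real.sin (N*θ) * Real.sin θ) θ := by
  have d : HasDerivAt (fun x => (Real.sin ((N-1)*x)/(N-1) - Real.sin ((N+1)*x)/(N+1))/2)
      (((N-1) * Real.cos ((N-1)*θ)/(N-1) - (N+1) * Real.cos ((N+1)*θ)/(N+1))/2) θ :=
    (((hasDerivAt_sin_cmul (N-1) θ).div_const (N-1)).sub
      ((hasDerivAt_sin_cmul (N+1) θ).div_const (N+1))).div_const 2
  convert d using 1
  have c1 : (N-1) * (Real.cos ((N-1)*θ) / (N-1)) = Real.cos ((N-1)*θ) := by field_simp
  have c2 : (N+1) * (Real.cos ((N+1)*θ) / (N+1)) = Real.cos ((N+1)*θ) := by field_simp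
  rw [mul_div_assoc, mul_div_assoc, c1, c2]
  have : Real.cos ((N-1)*θ) - Real.cos ((N+1)*θ)
      = -2 * Real.sin ((((N-1)*θ) + ((N+1)*θ))/2) * Real.sin ((((N-1)*θ) - ((N+1)*θ))/2) :=
    Real.cos_sub_cos _ _
  have e1 : (((N-1)*θ) + ((N+1)*θ))/2 = N*θ := by ring
  have e2 : (((N-1)*θ) - ((N+1)*θ))/2 = -θ := by ring
  rw [e1, e2, Real.sin_neg] at this
  nlinarith [this]

lemma piece (n : ℕ) (hn : 2 ≤ n) (k : ℕ) :
    (∫ θ in ((k:ℝ)*Real.pi/n)..((((k+1):ℕ):ℝ)*Real.pi/n), |Real.sin (n*θ)| * Real.sin θ)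
      = (Real.sin ((((k+1):ℕ):ℝ)*Real.pi/n) + Real.sin ((k:ℝ)*Real.pi/n))
        * ((n:ℝ)/((n:ℝ)^2-1)) := by
  have hN2 : (2:ℝ) ≤ (n:ℝ) := by exact_mod_cast hn
  set N := (n:ℝ) with hNdef
  have hN0 : 0 < N := by linarith
  have h1 : N - 1 ≠ 0 := by intro h; linarith [h]
  have h2 : N + 1 ≠ 0 := by intro h; linarith [h]
  set a : ℝ := (k:ℝ)*Real.pi/N with ha
  set b : ℝ := (((k+1):ℕ):ℝ)*Real.pi/N with hb
  have hab : a ≤ b := by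
    rw [ha, hb]
    gcongr ?x * Real.pi/N
    push_cast; linarith
  have hEq : Set.EqOn (fun θ => |Real.sin (N*θ)| * Real.sin θ)
      (fun θ => ((-1:ℝ)^k) * (Real.sin (N*θ) * Real.sin θ)) (Set.uIcc a b) := by
    intro θ hθ
    rw [Set.uIcc_of_le hab] at hθ
    obtain ⟨hθ1, hθ2⟩ := hθ
    have hk1 : (k:ℝ)*Real.pi ≤ θ*N := (div_le_iff₀ hN0).mp hθ1
    have hk2 : θ*N ≤ (((k+1):ℕ):ℝ)*Real.pi := (le_div_iff₀ hN0).mp hθ2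
    have ht0 : 0 ≤ N*θ - k*Real.pi := by linarith [mul_comm N θ]
    have htπ : N*θ - k*Real.pi ≤ Real.pi := by
      push_cast at hk2; nlinarith [mul_comm N θ]
    have key : Real.sin (N*θ) = (-1)^k * Real.sin (N*θ - k*Real.pi) := by
      have h := Real.sin_add_nat_mul_pi (N*θ - k*Real.pi) k
      rw [sub_add_cancel] at h
      exact h
    have hnn : 0 ≤ Real.sin (N*θ - k*Real.pi) :=
      Real.sin_nonneg_of_nonneg_of_le_pi ht0 htπ
    simp only []
    rw [key, abs_mul, abs_pow, abs_neg, abs_one, one_pow, one_mul, abs_of_nonneg hnn]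
    rcases neg_one_pow_eq_or ℝ k with h | h <;> rw [h] <;> ring
  rw [intervalIntegral.integral_congr hEq, intervalIntegral.integral_const_mul,
      intervalIntegral.integral_eq_sub_of_hasDerivAt
        (fun θ _ => hasDerivAt_F N h1 h2 θ)
        (Continuous.intervalIntegrable (by continuity) a b)]
  have ea1 : (N-1)*a = (k:ℝ)*Real.pi - (k:ℝ)*Real.pi/N := by rw [ha]; field_simp
  have ea2 : (N+1)*a = (k:ℝ)*Real.pi/N + (k:ℝ)*Real.pi := by rw [ha]; field_simp; ring
  have eb1 : (N-1)*b = (((k+1):ℕ):ℝ)*Real.pi - (((k+1):ℕ):ℝ)*Real.pi/N := by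
    rw [hb]; field_simp
  have eb2 : (N+1)*b = (((k+1):ℕ):ℝ)*Real.pi/N + (((k+1):ℕ):ℝ)*Real.pi := by
    rw [hb]; field_simp; ring
  rw [ea1, ea2, eb1, eb2, Real.sin_nat_mul_pi_sub, Real.sin_nat_mul_pi_sub,
      Real.sin_add_nat_mul_pi, Real.sin_add_nat_mul_pi]
  rw [← ha, ← hb]
  have hsq : N^2 - 1 ≠ 0 := by nlinarith
  clear_value N a b
  clear hEq ea1 ea2 eb1 eb2 hab ha hb hNdef hN2 hN0 hn
  rcases neg_one_pow_eq_or ℝ k with h | h <;> rw [pow_succ, h]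
  all_goals (
    have e : 1/(N-1) + 1/(N+1) = 2*N/(N^2-1) := by
      rw [div_add_div _ _ h1 h2]
      rw [show (N-1)*(N+1) = N^2-1 by ring]
      congr 1
      ring
    try linear_combination ((Real.sin b + Real.sin a)/2) * e
    try linear_combination (-(Real.sin b + Real.sin a)/2) * e
    skip)

lemma integral_main (n : ℕ) (hn : 2 ≤ n) :
    (∫ θ in (0:ℝ)..Real.pi, |Real.sin (n*θ)| * Real.sin θ)
      = 2*(n:ℝ)/((n:ℝ)^2-1) * Real.cot (Real.pi / (2*n)) := by
  have hn0 : 0 < n := by omega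
  have hN0 : (0:ℝ) < n := by exact_mod_cast hn0
  set f : ℕ → ℝ := fun k => (k:ℝ)*Real.pi/n with hf
  have hint : ∀ k < n, IntervalIntegrable (fun θ => |Real.sin (n*θ)| * Real.sin θ)
      MeasureTheory.volume (f k) (f (k+1)) := by
    intro k _
    exact Continuous.intervalIntegrable (by continuity) _ _
  have hsplit := intervalIntegral.sum_integral_adjacent_intervals hint
  have hf0 : f 0 = 0 := by simp [hf]
  have hfn : f n = Real.pi := by
    rw [hf]; field_simp
  rw [hf0, hfn] at hsplit
  rw [← hsplit]
  have hpieces : ∀ k ∈ Finset.range n,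
      (∫ θ in (f k)..(f (k+1)), |Real.sin (n*θ)| * Real.sin θ)
        = (Real.sin ((((k+1):ℕ):ℝ)*Real.pi/n) + Real.sin ((k:ℝ)*Real.pi/n))
          * ((n:ℝ)/((n:ℝ)^2-1)) := fun k _ => piece n hn k
  rw [Finset.sum_congr rfl hpieces]
  have hshift : ∑ k ∈ Finset.range n, Real.sin ((((k+1):ℕ):ℝ)*Real.pi/n)
      = ∑ k ∈ Finset.range n, Real.sin ((k:ℝ)*Real.pi/n) := by
    have h := Finset.sum_range_succ' (fun k : ℕ => Real.sin ((k:ℝ)*Real.pi/n)) n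
    have h2 := Finset.sum_range_succ (fun k : ℕ => Real.sin ((k:ℝ)*Real.pi/n)) n
    have hz : Real.sin ((n:ℝ)*Real.pi/n) = 0 := by
      have hh : (n:ℝ)*Real.pi/n = Real.pi := by field_simp
      rw [hh, Real.sin_pi]
    rw [hz, add_zero] at h2
    norm_num at h
    rw [h2] at h
    push_cast
    exact h.symm
  rw [← Finset.sum_mul, Finset.sum_add_distrib, hshift,
    sum_sin_eq_cot n (by omega)]
  ring


/-- Evaluation of `∫₀^π |sin((r+1)θ)| sin θ dθ` and the equivalent
form appearing in the Sato–Tate constant `δ_r`. -/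
theorem integral_abs_sin_mul_sin (r : ℕ) (hr : 1 ≤ r) :
    (∫ θ in (0:ℝ)..Real.pi, |Real.sin (((r : ℝ) + 1) * θ)| * Real.sin θ) =
      (2 * ((r : ℝ) + 1) / ((r : ℝ) * ((r : ℝ) + 2))) *
        Real.cot (Real.pi / (2 * ((r : ℝ) + 1))) ∧
    1 - (2 / Real.pi) * ∫ θ in (0:ℝ)..Real.pi,
        (|Real.sin (((r : ℝ) + 1) * θ)| / Real.sin θ) * Real.sin θ ^ 2 =
      1 - (4 * ((r : ℝ) + 1) / ((r : ℝ) * ((r : ℝ) + 2) * Real.pi)) *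
        Real.cot (Real.pi / (2 * ((r : ℝ) + 1))) := by
  have hr1 : (1:ℝ) ≤ (r:ℝ) := by exact_mod_cast hr
  have part1 : (∫ θ in (0:ℝ)..Real.pi, |Real.sin (((r : ℝ) + 1) * θ)| * Real.sin θ) =
      (2 * ((r : ℝ) + 1) / ((r : ℝ) * ((r : ℝ) + 2))) *
        Real.cot (Real.pi / (2 * ((r : ℝ) + 1))) := by
    have main := integral_main (r+1) (by omega)
    push_cast at main
    rw [main, show ((r:ℝ)+1)^2-1 = (r:ℝ)*((r:ℝ)+2) by ring]
  refine ⟨part1, ?_⟩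
  have hcong : (∫ θ in (0:ℝ)..Real.pi,
        (|Real.sin (((r : ℝ) + 1) * θ)| / Real.sin θ) * Real.sin θ ^ 2)
      = ∫ θ in (0:ℝ)..Real.pi, |Real.sin (((r : ℝ) + 1) * θ)| * Real.sin θ := by
    apply intervalIntegral.integral_congr
    intro θ _
    simp only
    rcases eq_or_ne (Real.sin θ) 0 with h | h
    · simp [h]
    · field_simp
  rw [hcong, part1]
  have hpi : Real.pi ≠ 0 := ne_of_gt Real.pi_pos
  have hR : (r:ℝ) ≠ 0 := by intro h; linarith
  have hR2 : (r:ℝ) + 2 ≠ 0 := by intro h; linarith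
  have key : (2/Real.pi) * ((2 * ((r:ℝ)+1) / ((r:ℝ) * ((r:ℝ)+2)))
        * Real.cot (Real.pi / (2 * ((r:ℝ)+1))))
      = (4 * ((r:ℝ)+1) / ((r:ℝ) * ((r:ℝ)+2) * Real.pi))
        * Real.cot (Real.pi / (2 * ((r:ℝ)+1))) := by
    field_simp
    ring
  rw [key]
end
end

section
/- Define δ_r = 1 − (4(r+1) / (r(r+2)π)) · cot(π / (2(r+1))) for integers r ≥ 1. Then the sequence (δ_r) is strictly increasing: δ_r < δ_{r+1} for every integer r ≥ 1. -/
set_option linter.unnecessarySeqFocus false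
set_option linter.unusedTactic false

open Real Set

lemma nonneg_of_deriv_aux (f f' : ℝ → ℝ) (c : ℝ)
    (hd : ∀ x, HasDerivAt f (f' x) x) (h0 : f 0 = 0)
    (hf' : ∀ x ∈ Icc (0:ℝ) c, 0 ≤ f' x) {x : ℝ} (hx : x ∈ Icc (0:ℝ) c) : 0 ≤ f x := by
  have hmono : MonotoneOn f (Icc (0:ℝ) c) := by
    apply monotoneOn_of_deriv_nonneg (convex_Icc _ _)
    · exact fun y _ => (hd y).continuousAt.continuousWithinAt
    · exact fun y hy => ((hd y).differentiableAt).differentiableWithinAt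
    · intro y hy
      rw [(hd y).deriv]
      exact hf' y (interior_subset hy)
  have h0m : (0:ℝ) ∈ Icc (0:ℝ) c := ⟨le_refl _, le_trans hx.1 hx.2⟩
  have := hmono h0m hx hx.1
  linarith [this, h0.ge]

lemma lemA {x : ℝ} (hx : x ∈ Icc (0:ℝ) (π/2)) : 0 ≤ Real.sin x - x * Real.cos x := by
  apply nonneg_of_deriv_aux (fun y => Real.sin y - y * Real.cos y) (fun y => y * Real.sin y) (π/2)
  · intro y
    have h1 := (Real.hasDerivAt_sin y).sub ((hasDerivAt_id y).mul (Real.hasDerivAt_cos y))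
    convert h1 using 1
    all_goals (try funext z) <;> (try rfl) <;> simp only [id_eq, Pi.sub_apply, Pi.mul_apply] <;> ring
  · simp
  · intro y hy
    have hs : 0 ≤ Real.sin y := Real.sin_nonneg_of_nonneg_of_le_pi hy.1 (by linarith [hy.2, Real.pi_pos])
    exact mul_nonneg hy.1 hs
  · exact hx

lemma lemB {x : ℝ} (hx : x ∈ Icc (0:ℝ) (π/2)) :
    0 ≤ (3 - x^2) * Real.sin x - 3 * x * Real.cos x := by
  apply nonneg_of_deriv_aux (fun y => (3 - y^2) * Real.sin y - 3 * y * Real.cos y)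
    (fun y => y * (Real.sin y - y * Real.cos y)) (π/2)
  · intro y
    have h1 := (((hasDerivAt_const y (3:ℝ)).sub (hasDerivAt_pow 2 y)).mul (Real.hasDerivAt_sin y)).sub
      (((hasDerivAt_const y (3:ℝ)).mul (hasDerivAt_id y)).mul (Real.hasDerivAt_cos y))
    convert h1 using 1
    all_goals (try funext z) <;> (try rfl) <;> simp only [id_eq, Pi.sub_apply, Pi.mul_apply, Pi.add_apply, Pi.neg_apply, Pi.div_apply] <;> push_cast <;> ring
  · simp
  · intro y hy
    exact mul_nonneg hy.1 (lemA hy)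
  · exact hx

lemma lemPsi {x : ℝ} (hx : x ∈ Icc (0:ℝ) (π/2)) :
    0 ≤ -Real.sin x + x * Real.cos x + (4/5) * x^2 * Real.sin x + (1/5) * x^3 * Real.cos x := by
  apply nonneg_of_deriv_aux
    (fun y => -Real.sin y + y * Real.cos y + (4/5) * y^2 * Real.sin y + (1/5) * y^3 * Real.cos y)
    (fun y => (y/5) * (3 * Real.sin y + 7 * y * Real.cos y - y^2 * Real.sin y)) (π/2)
  · intro y
    have h1 := (((Real.hasDerivAt_sin y).neg.add ((hasDerivAt_id y).mul (Real.hasDerivAt_cos y))).add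
      (((hasDerivAt_const y ((4:ℝ)/5)).mul (hasDerivAt_pow 2 y)).mul (Real.hasDerivAt_sin y))).add
      (((hasDerivAt_const y ((1:ℝ)/5)).mul (hasDerivAt_pow 3 y)).mul (Real.hasDerivAt_cos y))
    convert h1 using 1
    all_goals (try funext z) <;> (try rfl) <;> simp only [id_eq, Pi.sub_apply, Pi.mul_apply, Pi.add_apply, Pi.neg_apply, Pi.div_apply] <;> push_cast <;> ring
  · simp
  · intro y hy
    have hs : 0 ≤ Real.sin y := Real.sin_nonneg_of_nonneg_of_le_pi hy.1 (by linarith [hy.2, Real.pi_pos])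
    have hc : 0 ≤ Real.cos y := Real.cos_nonneg_of_mem_Icc ⟨by linarith [hy.1, Real.pi_pos], hy.2⟩
    have hy2 : y^2 ≤ 3 := by nlinarith [hy.2, Real.pi_lt_d2, hy.1]
    have hkey : 0 ≤ 3 * Real.sin y + 7 * y * Real.cos y - y^2 * Real.sin y := by
      nlinarith [mul_nonneg (by linarith : (0:ℝ) ≤ 3 - y^2) hs, mul_nonneg hy.1 hc]
    have := mul_nonneg (by linarith [hy.1] : (0:ℝ) ≤ y/5) hkey
    linarith
  · exact hx

lemma lemPhi1 {x : ℝ} (hx : x ∈ Icc (0:ℝ) (π/2)) :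
    0 ≤ 3 * x * Real.cos x - (3 - x^2 - x^4/5) * Real.sin x := by
  apply nonneg_of_deriv_aux
    (fun y => 3 * y * Real.cos y - (3 - y^2 - y^4/5) * Real.sin y)
    (fun y => y * (-Real.sin y + y * Real.cos y + (4/5) * y^2 * Real.sin y + (1/5) * y^3 * Real.cos y)) (π/2)
  · intro y
    have h1 := ((((hasDerivAt_const y (3:ℝ)).mul (hasDerivAt_id y)).mul (Real.hasDerivAt_cos y))).sub
      ((((hasDerivAt_const y (3:ℝ)).sub (hasDerivAt_pow 2 y)).sub
        ((hasDerivAt_pow 4 y).div_const 5)).mul (Real.hasDerivAt_sin y))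
    convert h1 using 1
    all_goals (try funext z) <;> (try rfl) <;> simp only [id_eq, Pi.sub_apply, Pi.mul_apply, Pi.add_apply, Pi.neg_apply, Pi.div_apply] <;> push_cast <;> ring
  · simp
  · intro y hy
    exact mul_nonneg hy.1 (lemPsi hy)
  · exact hx


lemma cot_upper {x : ℝ} (hx0 : 0 < x) (hx : x ≤ π/2) :
    Real.cot x ≤ (3 - x^2) / (3*x) := by
  have hs : 0 < Real.sin x := Real.sin_pos_of_pos_of_lt_pi hx0 (by linarith [Real.pi_pos])
  rw [Real.cot_eq_cos_div_sin, div_le_div_iff₀ hs (by linarith)]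
  have := lemB (x := x) ⟨hx0.le, hx⟩
  nlinarith

lemma cot_lower {x : ℝ} (hx0 : 0 < x) (hx : x ≤ π/2) :
    (3 - x^2 - x^4/5) / (3*x) ≤ Real.cot x := by
  have hs : 0 < Real.sin x := Real.sin_pos_of_pos_of_lt_pi hx0 (by linarith [Real.pi_pos])
  rw [Real.cot_eq_cos_div_sin, div_le_div_iff₀ (by linarith) hs]
  have := lemPhi1 (x := x) ⟨hx0.le, hx⟩
  nlinarith

noncomputable section

/-- The Sato–Tate exponent `δ_r = 1 - (4(r+1)/(r(r+2)π)) cot(π/(2(r+1)))`. -/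
def deltaST (r : ℕ) : ℝ :=
  1 - (4 * ((r : ℝ) + 1) / ((r : ℝ) * ((r : ℝ) + 2) * Real.pi)) *
    Real.cot (Real.pi / (2 * ((r : ℝ) + 1)))

set_option maxHeartbeats 1000000 in
/-- The sequence `(δ_r)_{r ≥ 1}` is strictly increasing. -/
theorem deltaST_strictMono (r : ℕ) (hr : 1 ≤ r) : deltaST r < deltaST (r + 1) := by
  obtain ⟨n, hn2, hrn⟩ : ∃ n : ℝ, 2 ≤ n ∧ (r:ℝ) = n - 1 := by
    refine ⟨(r:ℝ) + 1, ?_, by ring⟩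
    have : (1:ℝ) ≤ (r:ℝ) := by exact_mod_cast hr
    linarith
  have hπ : (0:ℝ) < π := Real.pi_pos
  have hπu : π < 3.1416 := by linarith [Real.pi_lt_d6]
  have hπ2 : π^2 < 9.8697 := by nlinarith
  have hπ4 : π^4 < 97.42 := by nlinarith [sq_nonneg (π^2), hπ2, pow_pos hπ 2]
  set a : ℝ := π / (2 * n) with ha
  set b : ℝ := π / (2 * (n+1)) with hb
  have hn0 : (0:ℝ) < n := by linarith
  have ha0 : 0 < a := by rw [ha]; positivity
  have hb0 : 0 < b := by rw [hb]; positivity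
  have haπ : a ≤ π/2 := by
    rw [ha, div_le_div_iff₀ (by linarith) (by norm_num)]
    nlinarith
  have hbπ : b ≤ π/2 := by
    rw [hb, div_le_div_iff₀ (by linarith) (by norm_num)]
    nlinarith
  have hcota := cot_lower ha0 haπ
  have hcotb := cot_upper hb0 hbπ
  have hLB : (3 - a^2 - a^4/5) / (3*a) = (240*n^4 - 20*π^2*n^2 - π^4) / (120*π*n^3) := by
    rw [ha]; field_simp; ring
  have hUB : (3 - b^2) / (3*b) = (12*(n+1)^2 - π^2) / (6*π*(n+1)) := by
    rw [hb]; field_simp; ring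
  rw [hLB] at hcota
  rw [hUB] at hcotb
  -- rewrite the goal
  rw [deltaST, deltaST]
  push_cast
  rw [hrn]
  have ea : 2 * ((n:ℝ) - 1 + 1) = 2 * n := by ring
  have eb : 2 * ((n:ℝ) - 1 + 1 + 1) = 2 * (n + 1) := by ring
  rw [ea, eb, ← ha, ← hb]
  have ec1 : 4 * (n - 1 + 1) / ((n - 1) * (n - 1 + 2) * π) = 4*n/((n-1)*(n+1)*π) := by ring
  have ec2 : 4 * (n - 1 + 1 + 1) / ((n - 1 + 1) * (n - 1 + 1 + 2) * π) = 4*(n+1)/(n*(n+2)*π) := by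
    ring
  rw [ec1, ec2]
  -- positivity of coefficients
  have hc1 : (0:ℝ) < 4*n/((n-1)*(n+1)*π) := by
    apply div_pos (by linarith)
    apply mul_pos (mul_pos (by linarith) (by linarith)) hπ
  have hc2 : (0:ℝ) < 4*(n+1)/(n*(n+2)*π) := by
    apply div_pos (by linarith)
    apply mul_pos (mul_pos (by linarith) (by linarith)) hπ
  -- the key rational inequality
  have key : (4*(n+1)/(n*(n+2)*π)) * ((12*(n+1)^2 - π^2) / (6*π*(n+1)))
      < (4*n/((n-1)*(n+1)*π)) * ((240*n^4 - 20*π^2*n^2 - π^4) / (120*π*n^3)) := by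
    rw [div_mul_div_comm, div_mul_div_comm,
      div_lt_div_iff₀
        (by apply mul_pos (mul_pos (mul_pos hn0 (by linarith)) hπ); positivity)
        (by apply mul_pos (mul_pos (mul_pos (by linarith) (by linarith)) hπ); positivity)]
    have h9 : (0:ℝ) ≤ 9.8697 - π^2 := by linarith
    have h97 : (0:ℝ) ≤ 97.42 - π^4 := by linarith
    have t1 : 0 ≤ (9.8697 - π^2) * n^2 := mul_nonneg h9 (sq_nonneg n)
    have t2 : 0 ≤ (9.8697 - π^2) * n := mul_nonneg h9 hn0.le
    have t3 : 0 ≤ (97.42 - π^4) * n := mul_nonneg h97 hn0.le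
    have t4 : 0 ≤ n^2 - 4*n + 4 := by nlinarith [sq_nonneg (n-2)]
    have hQ : 0 < (480 - 40*π^2)*n^2 + (240 - 20*π^2 - π^4)*n - 2*π^4 := by
      nlinarith [t1, t2, t3, t4]
    have hP : 0 < 24*π^2*n^2*(n+1) *
        ((480 - 40*π^2)*n^2 + (240 - 20*π^2 - π^4)*n - 2*π^4) := by
      apply mul_pos _ hQ
      have : (0:ℝ) < π^2 := pow_pos hπ 2
      apply mul_pos (mul_pos (mul_pos (by norm_num) this) (pow_pos hn0 2)) (by linarith)
    linarith [hP]
  have step1 : (4*(n+1)/(n*(n+2)*π)) * Real.cot b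
      ≤ (4*(n+1)/(n*(n+2)*π)) * ((12*(n+1)^2 - π^2) / (6*π*(n+1))) :=
    mul_le_mul_of_nonneg_left hcotb hc2.le
  have step3 : (4*n/((n-1)*(n+1)*π)) * ((240*n^4 - 20*π^2*n^2 - π^4) / (120*π*n^3))
      ≤ (4*n/((n-1)*(n+1)*π)) * Real.cot a :=
    mul_le_mul_of_nonneg_left hcota hc1.le
  linarith
end
end

section
/- Define δ_r = 1 − (4(r+1) / (r(r+2)π)) · cot(π / (2(r+1))) for integers r ≥ 1. Then δ₁ = 1 − 8/(3π), and for every integer r ≥ 1 one has 0.15 < 1 − 8/(3π) ≤ δ_r < 1 − 8/π² < 0.19. -/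
noncomputable section

open Real

private lemma sin_cos_aux {x : ℝ} (hx0 : 0 < x) (hx1 : x ≤ 1) :
    Real.sin x ≤ x - x^3/6 + x^4 * (5/96) ∧
    x - x^3/6 - x^4 * (5/96) ≤ Real.sin x ∧
    Real.cos x ≤ 1 - x^2/2 + x^4 * (5/96) ∧
    1 - x^2/2 - x^4 * (5/96) ≤ Real.cos x := by
  have hxa : |x| ≤ 1 := by rw [abs_of_pos hx0]; exact hx1
  have h1 := Real.sin_bound hxa
  have h2 := Real.cos_bound hxa
  rw [abs_of_pos hx0] at h1 h2
  rw [abs_le] at h1 h2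
  exact ⟨by nlinarith [h1.2, mul_le_mul_of_nonneg_left hx1 (pow_nonneg hx0.le 4)], by nlinarith [h1.1, mul_le_mul_of_nonneg_left hx1 (pow_nonneg hx0.le 4)], by linarith [h2.2], by linarith [h2.1]⟩

private lemma key1 {x : ℝ} (hx0 : 0 < x) (hx1 : x ≤ 0.53) :
    (5 - 2*x^2) * Real.sin x ≤ 5 * x * Real.cos x := by
  obtain ⟨hsU, _, _, hcL⟩ := sin_cos_aux hx0 (by linarith)
  have h5 : (0:ℝ) ≤ 5 - 2*x^2 := by nlinarith
  have h1 : 0 ≤ (Real.cos x - (1 - x^2/2 - x^4*(5/96))) * x :=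
    mul_nonneg (by linarith) hx0.le
  have h2 : 0 ≤ ((x - x^3/6 + x^4*(5/96)) - Real.sin x) * (5 - 2*x^2) :=
    mul_nonneg (by linarith) h5
  have h3 : 0 ≤ (0.53 - x) * x^3 := mul_nonneg (by linarith) (by positivity)
  have h4 : 0 ≤ (0.53 - x) * x^4 := mul_nonneg (by linarith) (by positivity)
  have h6 : 0 ≤ x^6 := by positivity
  nlinarith [h1, h2, h3, h4, h6, pow_pos hx0 3]

private lemma key3 {x : ℝ} (hx0 : 0 < x) (hx1 : x ≤ 1) :
    4 * x * Real.cos x ≤ (4 - x^2) * Real.sin x := by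
  obtain ⟨_, hsL, hcU, _⟩ := sin_cos_aux hx0 hx1
  have h5 : (0:ℝ) ≤ 4 - x^2 := by nlinarith
  have h1 : 0 ≤ ((1 - x^2/2 + x^4*(5/96)) - Real.cos x) * x :=
    mul_nonneg (by linarith) hx0.le
  have h2 : 0 ≤ (Real.sin x - (x - x^3/6 - x^4*(5/96))) * (4 - x^2) :=
    mul_nonneg (by linarith) h5
  have h3 : 0 ≤ (1 - x) * x^3 := mul_nonneg (by linarith) (by positivity)
  have h4 : 0 ≤ (1 - x) * x^4 := mul_nonneg (by linarith) (by positivity)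
  have h6 : 0 ≤ x^6 := by positivity
  nlinarith [h1, h2, h3, h4, h6, pow_pos hx0 3]

private lemma cot_core_lb {s : ℝ} (hs : 3 ≤ s) :
    2*(s^2-1)/(π*s) < Real.cot (π/(2*s)) := by
  have hπl := Real.pi_gt_d6
  have hπu := Real.pi_lt_d6
  have hs0 : (0:ℝ) < s := by linarith
  set x := π/(2*s) with hxdef
  have hx0 : 0 < x := by positivity
  have hxs : x * (2*s) = π := by rw [hxdef]; field_simp
  have hxu : x ≤ 0.53 := by nlinarith [mul_nonneg hx0.le (by linarith : (0:ℝ) ≤ s - 3)]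
  have hsin : 0 < Real.sin x := Real.sin_pos_of_pos_of_lt_pi hx0 (by nlinarith)
  have key := key1 hx0 hxu
  rw [Real.cot_eq_cos_div_sin, div_lt_div_iff₀ (by positivity) hsin]
  have hE : π*s*(5-2*x^2) - 10*x*(s^2-1) = x*(10 - π^2) := by
    linear_combination (-(5*s) - π*x) * hxs
  have hcoef : 10*x*(s^2-1) < π*s*(5-2*x^2) := by nlinarith [hx0, hE]
  have h1 : 10*x*(s^2-1) * Real.sin x < π*s*(5-2*x^2) * Real.sin x :=
    mul_lt_mul_of_pos_right hcoef hsin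
  have h2 : π*s*((5-2*x^2) * Real.sin x) ≤ π*s*(5 * x * Real.cos x) :=
    mul_le_mul_of_nonneg_left key (by positivity)
  have final : (5*x) * (2*(s^2-1) * Real.sin x) < (5*x) * (Real.cos x * (π*s)) := by
    nlinarith [h1, h2]
  exact lt_of_mul_lt_mul_left final (by positivity)

private lemma cot_core_ub {s : ℝ} (hs : 4 ≤ s) :
    Real.cot (π/(2*s)) ≤ 2*(s^2-1)/(3*s) := by
  have hπl := Real.pi_gt_d6
  have hπu := Real.pi_lt_d6
  have hs0 : (0:ℝ) < s := by linarith
  set x := π/(2*s) with hxdef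
  have hx0 : 0 < x := by positivity
  have hxs : x * (2*s) = π := by rw [hxdef]; field_simp
  have hxu : x ≤ 0.3927 := by nlinarith [mul_nonneg hx0.le (by linarith : (0:ℝ) ≤ s - 4)]
  have hsin : 0 < Real.sin x := Real.sin_pos_of_pos_of_lt_pi hx0 (by nlinarith)
  have key := key3 hx0 (by linarith)
  rw [Real.cot_eq_cos_div_sin, div_le_div_iff₀ hsin (by positivity)]
  have hE : 8*x*(s^2-1) - 3*s*(4-x^2) = 4*π*s - 8*x - 12*s + (3/2)*π*x := by
    linear_combination (4*s + (3/2)*x) * hxs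
  have hcoef : 3*s*(4-x^2) ≤ 8*x*(s^2-1) := by
    nlinarith [hE, mul_nonneg (by linarith : (0:ℝ) ≤ π - 3) (by linarith : (0:ℝ) ≤ s - 4)]
  have h1 : 3*s*(4-x^2) * Real.sin x ≤ 8*x*(s^2-1) * Real.sin x :=
    mul_le_mul_of_nonneg_right hcoef hsin.le
  have h2 : 3*s*(4 * x * Real.cos x) ≤ 3*s*((4-x^2) * Real.sin x) :=
    mul_le_mul_of_nonneg_left key (by positivity)
  have final : (4*x) * (Real.cos x * (3*s)) ≤ (4*x) * (2*(s^2-1) * Real.sin x) := by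
    nlinarith [h1, h2]
  exact le_of_mul_le_mul_left final (by positivity)

private lemma delta_ub (r : ℕ) (hr : 2 ≤ r) : deltaST r < 1 - 8/π^2 := by
  have hR : (2:ℝ) ≤ (r:ℝ) := by exact_mod_cast hr
  have hπ : (0:ℝ) < π := Real.pi_pos
  have hcot := cot_core_lb (s := (r:ℝ)+1) (by linarith)
  have hA : (0:ℝ) < 4*((r:ℝ)+1)/((r:ℝ)*((r:ℝ)+2)*π) := by
    apply div_pos (by linarith)
    apply mul_pos (mul_pos (by linarith) (by linarith)) hπ
  have heq : (4*((r:ℝ)+1)/((r:ℝ)*((r:ℝ)+2)*π)) * (2*(((r:ℝ)+1)^2-1)/(π*((r:ℝ)+1)))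
      = 8/π^2 := by
    have h1 : (r:ℝ) ≠ 0 := by linarith
    have h2 : (r:ℝ)+2 ≠ 0 := by linarith
    have h3 : (r:ℝ)+1 ≠ 0 := by linarith
    field_simp
    ring
  have h2 : 8/π^2 < (4*((r:ℝ)+1)/((r:ℝ)*((r:ℝ)+2)*π)) * Real.cot (π/(2*((r:ℝ)+1))) := by
    rw [← heq]
    exact mul_lt_mul_of_pos_left hcot hA
  unfold deltaST
  linarith

private lemma delta_lb (r : ℕ) (hr : 3 ≤ r) : 1 - 8/(3*π) ≤ deltaST r := by
  have hR : (3:ℝ) ≤ (r:ℝ) := by exact_mod_cast hr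
  have hπ : (0:ℝ) < π := Real.pi_pos
  have hcot := cot_core_ub (s := (r:ℝ)+1) (by linarith)
  have hA : (0:ℝ) < 4*((r:ℝ)+1)/((r:ℝ)*((r:ℝ)+2)*π) := by
    apply div_pos (by linarith)
    apply mul_pos (mul_pos (by linarith) (by linarith)) hπ
  have heq : (4*((r:ℝ)+1)/((r:ℝ)*((r:ℝ)+2)*π)) * (2*(((r:ℝ)+1)^2-1)/(3*((r:ℝ)+1)))
      = 8/(3*π) := by
    have h1 : (r:ℝ) ≠ 0 := by linarith
    have h2 : (r:ℝ)+2 ≠ 0 := by linarith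
    have h3 : (r:ℝ)+1 ≠ 0 := by linarith
    field_simp
    ring
  have h2 : (4*((r:ℝ)+1)/((r:ℝ)*((r:ℝ)+2)*π)) * Real.cot (π/(2*((r:ℝ)+1))) ≤ 8/(3*π) := by
    rw [← heq]
    exact mul_le_mul_of_nonneg_left hcot hA.le
  unfold deltaST
  linarith

private lemma cot_pi_div_four' : Real.cot (π/4) = 1 := by
  rw [Real.cot_eq_cos_div_sin, Real.cos_pi_div_four, Real.sin_pi_div_four,
    div_self (by positivity)]

private lemma cot_pi_div_six' : Real.cot (π/6) = Real.sqrt 3 := by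
  rw [Real.cot_eq_cos_div_sin, Real.cos_pi_div_six, Real.sin_pi_div_six]
  field_simp

private lemma delta_one : deltaST 1 = 1 - 8 / (3 * π) := by
  unfold deltaST
  push_cast
  rw [show (2:ℝ)*((1:ℝ)+1) = 4 by norm_num, cot_pi_div_four']
  norm_num

private lemma delta_two : deltaST 2 = 1 - (3/(2*π)) * Real.sqrt 3 := by
  unfold deltaST
  push_cast
  rw [show (2:ℝ)*((2:ℝ)+1) = 6 by norm_num, cot_pi_div_six']
  have hπ : (0:ℝ) < π := Real.pi_pos
  have : (4:ℝ) * (2+1) / (2*(2+2)*π) = 3/(2*π) := by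
    field_simp; ring
  rw [this]

/-- `δ₁ = 1 - 8/(3π)`, and `0.15 < 1 - 8/(3π) ≤ δ_r < 1 - 8/π² < 0.19`
for every `r ≥ 1`. -/
theorem deltaST_bounds :
    deltaST 1 = 1 - 8 / (3 * Real.pi) ∧
    (0.15 : ℝ) < 1 - 8 / (3 * Real.pi) ∧
    (∀ r : ℕ, 1 ≤ r →
      1 - 8 / (3 * Real.pi) ≤ deltaST r ∧ deltaST r < 1 - 8 / Real.pi ^ 2) ∧
    1 - 8 / Real.pi ^ 2 < (0.19 : ℝ) := by
  have hπl := Real.pi_gt_d6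
  have hπu := Real.pi_lt_d6
  have hπ : (0:ℝ) < π := Real.pi_pos
  refine ⟨delta_one, ?_, ?_, ?_⟩
  · have : 8/(3*π) < 0.85 := by
      rw [div_lt_iff₀ (by positivity)]
      nlinarith
    linarith
  · intro r hr
    match r, hr with
    | 1, _ =>
      refine ⟨le_of_eq delta_one.symm, ?_⟩
      rw [delta_one]
      have : 8/π^2 < 8/(3*π) := by
        rw [div_lt_div_iff₀ (by positivity) (by positivity)]
        nlinarith
      linarith
    | 2, _ =>
      refine ⟨?_, delta_ub 2 le_rfl⟩
      rw [delta_two]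
      have hs3 : Real.sqrt 3 ≤ 16/9 := by
        nlinarith [Real.sq_sqrt (by norm_num : (3:ℝ) ≥ 0), Real.sqrt_nonneg 3]
      have h1 : 3/(2*π) * Real.sqrt 3 ≤ 3/(2*π) * (16/9) :=
        mul_le_mul_of_nonneg_left hs3 (by positivity)
      have h2 : 3/(2*π) * (16/9 : ℝ) = 8/(3*π) := by
        field_simp; ring
      linarith
    | (n+3), _ =>
      exact ⟨delta_lb (n+3) (by omega), delta_ub (n+3) (by omega)⟩
  · have : (0.81:ℝ) < 8/π^2 := by
      rw [lt_div_iff₀ (by positivity)]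
      nlinarith
    linarith
end
end
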